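/- Let J₁ ⊆ J₂ ⊆ I be ideals in a commutative ring R. Assume J₁ ∩ J₂ⁿ⁻¹ = J₁·J₂ⁿ⁻¹ and Iⁿ ⊆ J₂ⁿ + J₁ for all n ≥ 1. Then J₁ ∩ Iⁿ = J₁·Iⁿ⁻¹ for all n ≥ 1, i.e. J₁ ⊆ I is Aluffi torsion-free. -/

import Mathlib

/-- If `J₁ ∩ J₂ⁿ⁻¹ = J₁·J₂ⁿ⁻¹` and `Iⁿ ⊆ J₂ⁿ + J₁` for all `n ≥ 1`, then
`J₁ ⊆ I` is Aluffi torsion-free. -/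
theorem aluffi_torsion_free_of_inter_and_pow {R : Type*} [CommRing R]
    (J₁ J₂ I : Ideal R) (h₁₂ : J₁ ≤ J₂) (h₂I : J₂ ≤ I)
    (h1 : ∀ n : ℕ, 1 ≤ n → J₁ ⊓ J₂ ^ (n - 1) = J₁ * J₂ ^ (n - 1))
    (h2 : ∀ n : ℕ, 1 ≤ n → I ^ n ≤ J₂ ^ n + J₁) :
    ∀ n : ℕ, 1 ≤ n → J₁ ⊓ I ^ n = J₁ * I ^ (n - 1) := by
  intro n hn
  induction n with
  | zero => omega
  | succ m ih =>
    rcases Nat.eq_zero_or_pos m with rfl | hm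
    · simp only [zero_add, pow_one, Nat.sub_self, pow_zero, mul_one]
      exact inf_eq_left.mpr (h₁₂.trans h₂I)
    have IH : J₁ ⊓ I ^ m = J₁ * I ^ (m - 1) := ih hm
    have hJ₂I : J₂ ^ m ≤ I ^ m := Ideal.pow_right_mono h₂I m
    -- modular law: I^m ≤ J₂^m ⊔ (J₁ ⊓ I^m)
    have hmod : I ^ m ≤ J₂ ^ m ⊔ (J₁ ⊓ I ^ m) := by
      have : (J₂ ^ m ⊔ J₁) ⊓ I ^ m = J₂ ^ m ⊔ (J₁ ⊓ I ^ m) :=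
        sup_inf_assoc_of_le _ hJ₂I
      rw [← this]
      exact le_inf (h2 m hm) le_rfl
    have hIm1 : I ^ (m - 1) * I = I ^ m := by
      rw [← pow_succ]
      congr 1
      omega
    have key : I ^ (m + 1) ≤ J₂ ^ m * I ⊔ J₁ * I ^ m := by
      rw [pow_succ]
      calc I ^ m * I ≤ (J₂ ^ m ⊔ (J₁ ⊓ I ^ m)) * I := Ideal.mul_mono_left hmod
        _ = J₂ ^ m * I ⊔ (J₁ ⊓ I ^ m) * I := Ideal.sup_mul _ _ _
        _ = J₂ ^ m * I ⊔ J₁ * I ^ m := by rw [IH, mul_assoc, hIm1]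
    have h1m : J₁ ⊓ J₂ ^ m = J₁ * J₂ ^ m := by
      have := h1 (m + 1) (by omega)
      simpa using this
    apply le_antisymm
    · rintro x ⟨hx1, hx2⟩
      obtain ⟨a, ha, b, hb, rfl⟩ := Submodule.mem_sup.mp (key hx2)
      have hbJ₁ : b ∈ J₁ * I ^ m := hb
      have haJ₁ : a ∈ J₁ := by
        have : a = (a + b) - b := by ring
        rw [this]
        exact sub_mem hx1 (Ideal.mul_le_left hb)
      have haJ₂ : a ∈ J₂ ^ m := Ideal.mul_le_left ha
      have : a ∈ J₁ * J₂ ^ m := h1m ▸ (⟨haJ₁, haJ₂⟩ : a ∈ J₁ ⊓ J₂ ^ m)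
      have haI : a ∈ J₁ * I ^ m := Ideal.mul_mono_right hJ₂I this
      have hgoal : a + b ∈ J₁ * I ^ m := add_mem haI hbJ₁
      simpa using hgoal
    · apply le_inf Ideal.mul_le_left
      calc J₁ * I ^ m ≤ I * I ^ m :=
            Ideal.mul_mono_left (h₁₂.trans h₂I)
        _ = I ^ (m + 1) := (pow_succ' I m).symm
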